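/- Let m ≥ 0 and t₀,…,t_{2^m} ∈ ℝ, and let u : V_m → ℝ be the unique minimizer of the level-m energy E_m subject to u(x_j) = t_j for all bottom-row points x_j (j = 0,…,2^m); equivalently, u is graph-harmonic at every vertex of V_m not in the bottom row, including at q₀. Then u(q₀) = 2^{−(m+1)}·(t₀ + 2t₁ + 2t₂ + ⋯ + 2t_{2^m−1} + t_{2^m}). -/

import Mathlib

open scoped BigOperators

noncomputable section

namespace SGPaper

/-- The three corners of the Sierpinski gasket:
`q₀ = (1/2, √3/2)`, `q₁ = (0,0)`, `q₂ = (1,0)`. -/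
def q : Fin 3 → ℝ × ℝ
  | 0 => (1 / 2, Real.sqrt 3 / 2)
  | 1 => (0, 0)
  | 2 => (1, 0)

/-- The contraction map towards corner `i`: `F_i(x) = (x + q_i)/2`. -/
def Fmap (i : Fin 3) (x : ℝ × ℝ) : ℝ × ℝ := (2⁻¹ : ℝ) • (x + q i)

/-- `Fword w = F_{w₁} ∘ ⋯ ∘ F_{w_m}` for the word `w = w₁⋯w_m`. -/
def Fword (w : List (Fin 3)) : ℝ × ℝ → ℝ × ℝ :=
  w.foldr (fun i f => Fmap i ∘ f) id

/-- The level-`m` vertex set of the Sierpinski gasket: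
`V_m = ⋃_{|w| = m} F_w({q₀, q₁, q₂})`. -/
def V (m : ℕ) : Set (ℝ × ℝ) :=
  {x | ∃ w : List (Fin 3), w.length = m ∧ ∃ i : Fin 3, x = Fword w (q i)}

/-- `x` and `y` are `m`-neighbors: they are distinct and belong to a common
level-`m` cell `F_w({q₀, q₁, q₂})`. -/
def Nbr (m : ℕ) (x y : ℝ × ℝ) : Prop :=
  x ≠ y ∧ ∃ w : List (Fin 3), w.length = m ∧
    (∃ i : Fin 3, x = Fword w (q i)) ∧ (∃ j : Fin 3, y = Fword w (q j))

/-- The value `(u x - u y)²` on the unordered pair `{x, y}`. -/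
def edgeVal (u : ℝ × ℝ → ℝ) : Sym2 (ℝ × ℝ) → ℝ :=
  Sym2.lift ⟨fun x y => (u x - u y) ^ 2, fun _ _ => by ring⟩

/-- The unordered pair `e` is an edge of the level-`m` graph `Γ_m`. -/
def IsEdge (m : ℕ) (e : Sym2 (ℝ × ℝ)) : Prop :=
  ∃ x y : ℝ × ℝ, Nbr m x y ∧ e = s(x, y)

/-- The level-`m` graph energy: `E_m(u) = (5/3)^m Σ (u x − u y)²`, the sum being over
unordered `m`-neighbor pairs `{x, y}` (a finite set, so `tsum` is the honest sum). -/
def Energy (m : ℕ) (u : ℝ × ℝ → ℝ) : ℝ :=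
  (5 / 3 : ℝ) ^ m * ∑' e : {e : Sym2 (ℝ × ℝ) // IsEdge m e}, edgeVal u e

/-- `Q_E(v)`: minimal level-`m` energy among functions `u : V_m → ℝ` agreeing
with `v` on `E` (the minimum is attained, so it equals this infimum). -/
def Q (m : ℕ) (E : Set (ℝ × ℝ)) (v : ℝ × ℝ → ℝ) : ℝ :=
  sInf {r | ∃ u : ℝ × ℝ → ℝ, (∀ x ∈ E, u x = v x) ∧ r = Energy m u}

/-- Indicator function of the point `z`. -/
def ind (z : ℝ × ℝ) : ℝ × ℝ → ℝ := fun t => if t = z then 1 else 0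

/-- The conductance `c^E_{x,y} = (Q_E(𝟙_x) + Q_E(𝟙_y) − Q_E(𝟙_x + 𝟙_y))/2`
between `x, y ∈ E`, computed at level `m`. -/
def cond (m : ℕ) (E : Set (ℝ × ℝ)) (x y : ℝ × ℝ) : ℝ :=
  (Q m E (ind x) + Q m E (ind y) - Q m E (ind x + ind y)) / 2

/-- The `j`-th bottom-row point of `V_n`: `x_j = q₁ + (j/2ⁿ)(q₂ − q₁)`. -/
def xb (n j : ℕ) : ℝ × ℝ := q 1 + ((j : ℝ) / 2 ^ n) • (q 2 - q 1)

/-- The bottom row `Ẽ_n = {x₀, …, x_{2ⁿ}}` of `V_n`. -/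
def Ebot (n : ℕ) : Set (ℝ × ℝ) := {p | ∃ j ≤ 2 ^ n, p = xb n j}

/-- The bottom row together with the top point: `E_n⁺ = {q₀, x₀, …, x_{2ⁿ}}`. -/
def Eplus (n : ℕ) : Set (ℝ × ℝ) := insert (q 0) (Ebot n)

-- coordinates
lemma q0_def : q 0 = (1/2, Real.sqrt 3/2) := rfl
lemma q1_def : q 1 = (0, 0) := rfl
lemma q2_def : q 2 = (1, 0) := rfl

lemma s3_pos : (0:ℝ) < Real.sqrt 3 := Real.sqrt_pos.2 (by norm_num)
lemma s3_sq : Real.sqrt 3 ^ 2 = 3 := Real.sq_sqrt (by norm_num)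

lemma Fmap_def (i : Fin 3) (x : ℝ × ℝ) :
    Fmap i x = ((x.1 + (q i).1)/2, (x.2 + (q i).2)/2) := by
  simp [Fmap, Prod.ext_iff, Prod.smul_fst, Prod.smul_snd]
  constructor <;> ring

lemma Fmap_inj (i : Fin 3) : Function.Injective (Fmap i) := by
  intro x y h
  rw [Fmap_def, Fmap_def, Prod.ext_iff] at h
  have h1 := h.1; have h2 := h.2
  ext <;> [skip; skip] <;> linarith

def T : Set (ℝ × ℝ) :=
  {p | 0 ≤ p.2 ∧ p.2 ≤ Real.sqrt 3 * p.1 ∧ p.2 ≤ Real.sqrt 3 * (1 - p.1)}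

lemma q_mem_T (i : Fin 3) : q i ∈ T := by
  fin_cases i <;> refine ⟨?_, ?_, ?_⟩ <;>
    simp [T, q0_def, q1_def, q2_def] <;> nlinarith [s3_pos]

lemma Fmap_mem_T {x : ℝ × ℝ} (hx : x ∈ T) (i : Fin 3) : Fmap i x ∈ T := by
  obtain ⟨h0, h1, h2⟩ := hx
  fin_cases i <;> rw [Fmap_def] <;>
    refine ⟨?_, ?_, ?_⟩ <;>
    simp [q0_def, q1_def, q2_def] <;> nlinarith [s3_pos]

-- basic bounds in T
lemma T_x_nonneg {z : ℝ × ℝ} (h : z ∈ T) : 0 ≤ z.1 := by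
  obtain ⟨h0, h1, h2⟩ := h; nlinarith [s3_pos]
lemma T_x_le_one {z : ℝ × ℝ} (h : z ∈ T) : z.1 ≤ 1 := by
  obtain ⟨h0, h1, h2⟩ := h; nlinarith [s3_pos]
lemma T_y_le {z : ℝ × ℝ} (h : z ∈ T) : z.2 ≤ Real.sqrt 3 / 2 := by
  obtain ⟨h0, h1, h2⟩ := h; nlinarith [s3_pos]

lemma sep01 {z z' : ℝ × ℝ} (hz : z ∈ T) (hz' : z' ∈ T)
    (h : Fmap 0 z = Fmap 1 z') : z = q 1 ∧ z' = q 0 := by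
  rw [Fmap_def, Fmap_def, Prod.ext_iff] at h
  simp [q0_def, q1_def] at h
  obtain ⟨hx, hy⟩ := h
  obtain ⟨h0, h1, h2⟩ := hz; obtain ⟨h0', h1', h2'⟩ := hz'
  have hy2 : z.2 = 0 := by nlinarith [s3_pos]
  have hz'y : z'.2 = Real.sqrt 3 / 2 := by nlinarith
  have hz1 : z.1 = 0 := by nlinarith [s3_pos]
  have : z'.1 = 1/2 := by nlinarith
  constructor <;> [exact Prod.ext hz1 hy2; exact Prod.ext this hz'y]

lemma sep02 {z z' : ℝ × ℝ} (hz : z ∈ T) (hz' : z' ∈ T)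
    (h : Fmap 0 z = Fmap 2 z') : z = q 2 ∧ z' = q 0 := by
  rw [Fmap_def, Fmap_def, Prod.ext_iff] at h
  simp [q0_def, q2_def] at h
  obtain ⟨hx, hy⟩ := h
  obtain ⟨h0, h1, h2⟩ := hz; obtain ⟨h0', h1', h2'⟩ := hz'
  have hy2 : z.2 = 0 := by nlinarith [s3_pos]
  have hz'y : z'.2 = Real.sqrt 3 / 2 := by nlinarith
  have hz'1 : z'.1 = 1/2 := by nlinarith [s3_pos]
  have hz1 : z.1 = 1 := by nlinarith
  constructor <;> [exact Prod.ext hz1 hy2; exact Prod.ext hz'1 hz'y]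

lemma sep12 {z z' : ℝ × ℝ} (hz : z ∈ T) (hz' : z' ∈ T)
    (h : Fmap 1 z = Fmap 2 z') : z = q 2 ∧ z' = q 1 := by
  rw [Fmap_def, Fmap_def, Prod.ext_iff] at h
  simp [q1_def, q2_def] at h
  obtain ⟨hx, hy⟩ := h
  obtain ⟨h0, h1, h2⟩ := hz; obtain ⟨h0', h1', h2'⟩ := hz'
  have hx0' : 0 ≤ z'.1 := T_x_nonneg ⟨h0', h1', h2'⟩
  have hz1 : z.1 = 1 := by nlinarith [s3_pos]
  have hy2 : z.2 = 0 := by nlinarith [s3_pos]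
  have hz'1 : z'.1 = 0 := by linarith
  have hz'2 : z'.2 = 0 := by linarith
  constructor <;> [exact Prod.ext hz1 hy2; exact Prod.ext hz'1 hz'2]

/-- Uniqueness of solutions to `Fmap i z = Fmap j z'` with `i ≠ j`: `z` is determined. -/
lemma sep_unique {i j : Fin 3} (hij : i ≠ j) {z z' w w' : ℝ × ℝ}
    (hz : z ∈ T) (hz' : z' ∈ T) (hw : w ∈ T) (hw' : w' ∈ T)
    (h1 : Fmap i z = Fmap j z') (h2 : Fmap i w = Fmap j w') : z = w := by
  fin_cases i <;> fin_cases j <;> first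
    | exact absurd rfl hij
    | (rw [(sep01 hz hz' h1).1, (sep01 hw hw' h2).1])
    | (rw [(sep02 hz hz' h1).1, (sep02 hw hw' h2).1])
    | (rw [(sep12 hz hz' h1).1, (sep12 hw hw' h2).1])
    | (rw [(sep01 hz' hz h1.symm).2, (sep01 hw' hw h2.symm).2])
    | (rw [(sep02 hz' hz h1.symm).2, (sep02 hw' hw h2.symm).2])
    | (rw [(sep12 hz' hz h1.symm).2, (sep12 hw' hw h2.symm).2])


-- real part 2 content
attribute [local instance] Classical.propDecidable

lemma Fword_nil (x : ℝ × ℝ) : Fword [] x = x := rfl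
lemma Fword_cons (i : Fin 3) (w : List (Fin 3)) (x : ℝ × ℝ) :
    Fword (i :: w) x = Fmap i (Fword w x) := rfl

lemma Fword_mem_T (w : List (Fin 3)) (i : Fin 3) : Fword w (q i) ∈ T := by
  induction w with
  | nil => exact q_mem_T i
  | cons a w ih => rw [Fword_cons]; exact Fmap_mem_T ih a

lemma V_subset_T (m : ℕ) : V m ⊆ T := by
  rintro x ⟨w, _, i, rfl⟩; exact Fword_mem_T w i

def edgeDom (m : ℕ) : Finset ((Fin m → Fin 3) × Fin 3 × Fin 3) :=
  Finset.univ.filter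
    (fun p => Fword (List.ofFn p.1) (q p.2.1) ≠ Fword (List.ofFn p.1) (q p.2.2))

def edgeFinset (m : ℕ) : Finset (Sym2 (ℝ × ℝ)) :=
  (edgeDom m).image
    (fun p => s(Fword (List.ofFn p.1) (q p.2.1), Fword (List.ofFn p.1) (q p.2.2)))

lemma mem_edgeFinset {m : ℕ} {e : Sym2 (ℝ × ℝ)} :
    e ∈ edgeFinset m ↔ IsEdge m e := by
  constructor
  · intro he
    simp only [edgeFinset, edgeDom, Finset.mem_image, Finset.mem_filter,
      Finset.mem_univ, true_and] at he
    obtain ⟨⟨f, i, j⟩, hne, rfl⟩ := he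
    exact ⟨_, _, ⟨hne, List.ofFn f, List.length_ofFn, ⟨i, rfl⟩, ⟨j, rfl⟩⟩, rfl⟩
  · rintro ⟨x, y, ⟨hxy, w, hlen, ⟨i, rfl⟩, ⟨j, rfl⟩⟩, rfl⟩
    subst hlen
    simp only [edgeFinset, edgeDom, Finset.mem_image, Finset.mem_filter,
      Finset.mem_univ, true_and]
    exact ⟨⟨fun k => w.get k, i, j⟩, by rw [List.ofFn_get]; exact hxy,
      by rw [List.ofFn_get]⟩

lemma edge_rep2 {m : ℕ} {e : Sym2 (ℝ × ℝ)} (he : e ∈ edgeFinset m) :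
    ∃ (w : List (Fin 3)) (i j : Fin 3), w.length = m ∧
      Fword w (q i) ≠ Fword w (q j) ∧ e = s(Fword w (q i), Fword w (q j)) := by
  simp only [edgeFinset, edgeDom, Finset.mem_image, Finset.mem_filter,
    Finset.mem_univ, true_and] at he
  obtain ⟨⟨f, i, j⟩, hne, rfl⟩ := he
  exact ⟨List.ofFn f, i, j, List.length_ofFn, hne, rfl⟩

lemma edge_rep {m : ℕ} {e : Sym2 (ℝ × ℝ)} (he : e ∈ edgeFinset m) :
    ∃ x y : ℝ × ℝ, x ∈ V m ∧ y ∈ V m ∧ x ≠ y ∧ e = s(x, y) := by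
  obtain ⟨w, i, j, hlen, hne, rfl⟩ := edge_rep2 he
  exact ⟨_, _, ⟨w, hlen, i, rfl⟩, ⟨w, hlen, j, rfl⟩, hne, rfl⟩

lemma energy_eq_sum (m : ℕ) (u : ℝ × ℝ → ℝ) :
    Energy m u = (5/3 : ℝ)^m * ∑ e ∈ edgeFinset m, edgeVal u e := by
  unfold Energy
  congr 1
  have h : ∀ e, e ∈ (edgeFinset m : Finset (Sym2 (ℝ × ℝ))) ↔ IsEdge m e :=
    fun e => mem_edgeFinset
  calc (∑' e : {e : Sym2 (ℝ × ℝ) // IsEdge m e}, edgeVal u e)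
      = ∑' e : {e : Sym2 (ℝ × ℝ) // e ∈ edgeFinset m}, edgeVal u e :=
        ((Equiv.subtypeEquivRight h).tsum_eq
          (fun e : {e : Sym2 (ℝ × ℝ) // IsEdge m e} => edgeVal u (e : Sym2 (ℝ × ℝ)))).symm
    _ = ∑ e ∈ edgeFinset m, edgeVal u e := Finset.tsum_subtype _ _

def bil (v w : ℝ × ℝ → ℝ) : Sym2 (ℝ × ℝ) → ℝ :=
  Sym2.lift ⟨fun x y => (v x - v y) * (w x - w y), fun _ _ => by ring⟩

def Bform (m : ℕ) (v w : ℝ × ℝ → ℝ) : ℝ :=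
  (5/3 : ℝ)^m * ∑ e ∈ edgeFinset m, bil v w e

lemma bil_congr {v w w' : ℝ × ℝ → ℝ} {x y : ℝ × ℝ} (hx : w x = w' x) (hy : w y = w' y) :
    bil v w s(x, y) = bil v w' s(x, y) := by
  simp [bil, Sym2.lift_mk, hx, hy]

lemma Bform_congr (m : ℕ) (v : ℝ × ℝ → ℝ) {w w' : ℝ × ℝ → ℝ}
    (h : ∀ x ∈ T, w x = w' x) : Bform m v w = Bform m v w' := by
  unfold Bform
  congr 1
  refine Finset.sum_congr rfl (fun e he => ?_)
  obtain ⟨x, y, hx, hy, _, rfl⟩ := edge_rep he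
  exact bil_congr (h x (V_subset_T m hx)) (h y (V_subset_T m hy))

lemma Bform_zero_right (m : ℕ) (v : ℝ × ℝ → ℝ) : Bform m v (fun _ => 0) = 0 := by
  unfold Bform
  rw [Finset.sum_eq_zero, mul_zero]
  intro e he
  induction e using Sym2.inductionOn with
  | hf x y => simp [bil, Sym2.lift_mk]

lemma Bform_smul_right (m : ℕ) (v w : ℝ × ℝ → ℝ) (c : ℝ) :
    Bform m v (fun x => c * w x) = c * Bform m v w := by
  unfold Bform
  have h : ∀ e ∈ edgeFinset m, bil v (fun x => c * w x) e = c * bil v w e := by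
    intro e _
    induction e using Sym2.inductionOn with
    | hf x y => simp only [bil, Sym2.lift_mk]; ring
  rw [Finset.sum_congr rfl h, ← Finset.mul_sum]
  ring

-- decomposition
lemma ofFn_cons' {m : ℕ} (i : Fin 3) (f : Fin m → Fin 3) :
    List.ofFn (Fin.cons i f : Fin (m+1) → Fin 3) = i :: List.ofFn f := by
  rw [List.ofFn_succ]
  simp

lemma edgeFinset_succ (m : ℕ) :
    edgeFinset (m+1) =
      Finset.univ.biUnion (fun i : Fin 3 => (edgeFinset m).image (Sym2.map (Fmap i))) := by
  ext e
  simp only [Finset.mem_biUnion, Finset.mem_univ, true_and, Finset.mem_image]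
  constructor
  · intro he
    simp only [edgeFinset, edgeDom, Finset.mem_image, Finset.mem_filter,
      Finset.mem_univ, true_and] at he
    obtain ⟨⟨f, i, j⟩, hne, rfl⟩ := he
    refine ⟨f 0, s(Fword (List.ofFn (fun k => f k.succ)) (q i),
        Fword (List.ofFn (fun k => f k.succ)) (q j)), ?_, ?_⟩
    · rw [mem_edgeFinset]
      refine ⟨_, _, ⟨?_, _, List.length_ofFn, ⟨i, rfl⟩, ⟨j, rfl⟩⟩, rfl⟩
      intro hcontra
      apply hne
      rw [List.ofFn_succ]
      rw [Fword_cons, Fword_cons, hcontra]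
    · rw [Sym2.map_pair_eq, List.ofFn_succ, Fword_cons, Fword_cons]
  · rintro ⟨i, e', he', rfl⟩
    obtain ⟨w, k, k', hlen, hne, rfl⟩ := edge_rep2 he'
    rw [mem_edgeFinset, Sym2.map_pair_eq]
    exact ⟨_, _, ⟨fun h => hne (Fmap_inj i h), i :: w, by simp [hlen],
      ⟨k, (Fword_cons i w (q k)).symm⟩, ⟨k', (Fword_cons i w (q k')).symm⟩⟩,
      rfl⟩



lemma images_disjoint {m : ℕ} {i j : Fin 3} (hij : i ≠ j) :
    Disjoint ((edgeFinset m).image (Sym2.map (Fmap i)))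
      ((edgeFinset m).image (Sym2.map (Fmap j))) := by
  rw [Finset.disjoint_left]
  rintro e he₁ he₂
  simp only [Finset.mem_image] at he₁ he₂
  obtain ⟨e₁, he₁m, rfl⟩ := he₁
  obtain ⟨e₂, he₂m, heq⟩ := he₂
  obtain ⟨x, y, hx, hy, hxy, rfl⟩ := edge_rep he₁m
  obtain ⟨x', y', hx', hy', hxy', rfl⟩ := edge_rep he₂m
  rw [Sym2.map_pair_eq, Sym2.map_pair_eq, Sym2.eq_iff] at heq
  have hxT := V_subset_T m hx; have hyT := V_subset_T m hy
  have hx'T := V_subset_T m hx'; have hy'T := V_subset_T m hy'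
  rcases heq with ⟨h1, h2⟩ | ⟨h1, h2⟩
  · exact hxy (sep_unique hij hxT hx'T hyT hy'T h1.symm h2.symm)
  · exact hxy (sep_unique hij hxT hy'T hyT hx'T h2.symm h1.symm)

lemma bil_map (v w : ℝ × ℝ → ℝ) (i : Fin 3) (e : Sym2 (ℝ × ℝ)) :
    bil v w (Sym2.map (Fmap i) e) = bil (v ∘ Fmap i) (w ∘ Fmap i) e := by
  induction e using Sym2.inductionOn with
  | hf x y => simp [bil, Sym2.map_pair_eq, Sym2.lift_mk]

lemma Bform_succ (m : ℕ) (v w : ℝ × ℝ → ℝ) :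
    Bform (m+1) v w = (5/3 : ℝ) * ∑ i : Fin 3, Bform m (v ∘ Fmap i) (w ∘ Fmap i) := by
  unfold Bform
  rw [edgeFinset_succ m]
  rw [Finset.sum_biUnion]
  · rw [Finset.mul_sum, Finset.mul_sum]
    refine Finset.sum_congr rfl (fun i _ => ?_)
    rw [Finset.sum_image (fun x _ y _ h => Sym2.map.injective (Fmap_inj i) h)]
    rw [Finset.sum_congr rfl (fun e _ => bil_map v w i e)]
    ring
  · intro i _ j _ hij
    exact images_disjoint hij


-- Part 3: point facts
lemma q0_1 : (q 0).1 = 1/2 := rfl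
lemma q0_2 : (q 0).2 = Real.sqrt 3/2 := rfl
lemma q1_1 : (q 1).1 = 0 := rfl
lemma q1_2 : (q 1).2 = 0 := rfl
lemma q2_1 : (q 2).1 = 1 := rfl
lemma q2_2 : (q 2).2 = 0 := rfl

lemma Fmap_fst (i : Fin 3) (z : ℝ × ℝ) : (Fmap i z).1 = (z.1 + (q i).1)/2 := by
  rw [Fmap_def]
lemma Fmap_snd (i : Fin 3) (z : ℝ × ℝ) : (Fmap i z).2 = (z.2 + (q i).2)/2 := by
  rw [Fmap_def]

lemma pt_ne_of_fst {p r : ℝ × ℝ} (h : p.1 ≠ r.1) : p ≠ r := fun hc => h (by rw [hc])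
lemma pt_ne_of_snd {p r : ℝ × ℝ} (h : p.2 ≠ r.2) : p ≠ r := fun hc => h (by rw [hc])

lemma q0_ne_q1 : q 0 ≠ q 1 := pt_ne_of_fst (by rw [q0_1, q1_1]; norm_num)
lemma q0_ne_q2 : q 0 ≠ q 2 := pt_ne_of_fst (by rw [q0_1, q2_1]; norm_num)
lemma q1_ne_q2 : q 1 ≠ q 2 := pt_ne_of_fst (by rw [q1_1, q2_1]; norm_num)

lemma xb_def (n j : ℕ) : xb n j = ((j : ℝ) / 2 ^ n, 0) := by
  unfold xb
  rw [q1_def, q2_def]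
  refine Prod.ext ?_ ?_ <;> simp

lemma xb_zero (n : ℕ) : xb n 0 = q 1 := by rw [xb_def, q1_def]; norm_num
lemma xb_top (n : ℕ) : xb n (2^n) = q 2 := by
  rw [xb_def, q2_def]
  have h : ((2:ℝ)^n) ≠ 0 := by positivity
  refine Prod.ext ?_ rfl
  push_cast
  field_simp

lemma Fmap0_q0 : Fmap 0 (q 0) = q 0 := by
  refine Prod.ext ?_ ?_
  · rw [Fmap_fst, q0_1]; norm_num
  · rw [Fmap_snd, q0_2]; norm_num
lemma Fmap1_q1 : Fmap 1 (q 1) = q 1 := by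
  refine Prod.ext ?_ ?_
  · rw [Fmap_fst, q1_1]; norm_num
  · rw [Fmap_snd, q1_2]; norm_num
lemma Fmap2_q2 : Fmap 2 (q 2) = q 2 := by
  refine Prod.ext ?_ ?_
  · rw [Fmap_fst, q2_1]; norm_num
  · rw [Fmap_snd, q2_2]; norm_num

lemma J01 : Fmap 0 (q 1) = Fmap 1 (q 0) := by
  refine Prod.ext ?_ ?_
  · rw [Fmap_fst, Fmap_fst, q0_1, q1_1]; norm_num
  · rw [Fmap_snd, Fmap_snd, q0_2, q1_2]; try norm_num
lemma J02 : Fmap 0 (q 2) = Fmap 2 (q 0) := by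
  refine Prod.ext ?_ ?_
  · rw [Fmap_fst, Fmap_fst, q0_1, q2_1]; norm_num
  · rw [Fmap_snd, Fmap_snd, q0_2, q2_2]; norm_num
lemma J12 : Fmap 1 (q 2) = Fmap 2 (q 1) := by
  refine Prod.ext ?_ ?_
  · rw [Fmap_fst, Fmap_fst, q1_1, q2_1]; norm_num
  · rw [Fmap_snd, Fmap_snd, q1_2, q2_2]

lemma Fmap1_xb (m j : ℕ) : Fmap 1 (xb m j) = xb (m+1) j := by
  rw [xb_def, xb_def]
  refine Prod.ext ?_ ?_
  · rw [Fmap_fst, q1_1]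
    show ((j:ℝ)/2^m + 0)/2 = (j:ℝ)/2^(m+1)
    rw [pow_succ]; ring
  · rw [Fmap_snd, q1_2]; norm_num

lemma Fmap2_xb (m j : ℕ) : Fmap 2 (xb m j) = xb (m+1) (j + 2^m) := by
  rw [xb_def, xb_def]
  refine Prod.ext ?_ ?_
  · rw [Fmap_fst, q2_1]
    show ((j:ℝ)/2^m + 1)/2 = ((j + 2^m : ℕ) : ℝ)/2^(m+1)
    have h : ((2:ℝ)^m) ≠ 0 := by positivity
    push_cast
    rw [pow_succ]
    field_simp
    try ring
  · rw [Fmap_snd, q2_2]; norm_num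

lemma ind_self (z : ℝ × ℝ) : ind z z = 1 := by simp [ind]
lemma ind_ne {y z : ℝ × ℝ} (h : y ≠ z) : ind z y = 0 := by simp [ind, h]

lemma ind_comp_inj {f : ℝ × ℝ → ℝ × ℝ} (hf : Function.Injective f) (c x : ℝ × ℝ) :
    ind (f c) (f x) = ind c x := by
  by_cases h : x = c
  · subst h; rw [ind_self, ind_self]
  · rw [ind_ne h, ind_ne (fun hc => h (hf hc))]

-- coordinate bounds of images
lemma Fmap0_snd {z : ℝ × ℝ} (hz : z ∈ T) : Real.sqrt 3 / 4 ≤ (Fmap 0 z).2 := by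
  rw [Fmap_snd, q0_2]; have h := hz.1; linarith
lemma Fmap1_snd {z : ℝ × ℝ} (hz : z ∈ T) : (Fmap 1 z).2 ≤ Real.sqrt 3 / 4 := by
  rw [Fmap_snd, q1_2]; have h := T_y_le hz; linarith
lemma Fmap2_snd {z : ℝ × ℝ} (hz : z ∈ T) : (Fmap 2 z).2 ≤ Real.sqrt 3 / 4 := by
  rw [Fmap_snd, q2_2]; have h := T_y_le hz; linarith
lemma Fmap1_fst {z : ℝ × ℝ} (hz : z ∈ T) : (Fmap 1 z).1 ≤ 1/2 := by
  rw [Fmap_fst, q1_1]; have h := T_x_le_one hz; linarith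
lemma Fmap2_fst {z : ℝ × ℝ} (hz : z ∈ T) : 1/2 ≤ (Fmap 2 z).1 := by
  rw [Fmap_fst, q2_1]; have h := T_x_nonneg hz; linarith

lemma ind_q0_F1 {z : ℝ × ℝ} (hz : z ∈ T) : ind (q 0) (Fmap 1 z) = 0 := by
  refine ind_ne (pt_ne_of_snd ?_)
  have h := Fmap1_snd hz
  rw [q0_2]
  intro hc; rw [hc] at h; nlinarith [s3_pos]
lemma ind_q0_F2 {z : ℝ × ℝ} (hz : z ∈ T) : ind (q 0) (Fmap 2 z) = 0 := by
  refine ind_ne (pt_ne_of_snd ?_)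
  have h := Fmap2_snd hz
  rw [q0_2]
  intro hc; rw [hc] at h; nlinarith [s3_pos]
lemma ind_q1_F0 {z : ℝ × ℝ} (hz : z ∈ T) : ind (q 1) (Fmap 0 z) = 0 := by
  refine ind_ne (pt_ne_of_snd ?_)
  have h := Fmap0_snd hz
  rw [q1_2]
  intro hc; rw [hc] at h; nlinarith [s3_pos]
lemma ind_q1_F2 {z : ℝ × ℝ} (hz : z ∈ T) : ind (q 1) (Fmap 2 z) = 0 := by
  refine ind_ne (pt_ne_of_fst ?_)
  have h := Fmap2_fst hz
  rw [q1_1]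
  intro hc; rw [hc] at h; linarith
lemma ind_q2_F0 {z : ℝ × ℝ} (hz : z ∈ T) : ind (q 2) (Fmap 0 z) = 0 := by
  refine ind_ne (pt_ne_of_snd ?_)
  have h := Fmap0_snd hz
  rw [q2_2]
  intro hc; rw [hc] at h; nlinarith [s3_pos]
lemma ind_q2_F1 {z : ℝ × ℝ} (hz : z ∈ T) : ind (q 2) (Fmap 1 z) = 0 := by
  refine ind_ne (pt_ne_of_fst ?_)
  have h := Fmap1_fst hz
  rw [q2_1]
  intro hc; rw [hc] at h; linarith
lemma J01_1 : (Fmap 0 (q 1)).1 = 1/4 := by rw [Fmap_fst, q0_1, q1_1]; norm_num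
lemma J01_2 : (Fmap 0 (q 1)).2 = Real.sqrt 3/4 := by rw [Fmap_snd, q0_2, q1_2]; ring
lemma J02_1 : (Fmap 0 (q 2)).1 = 3/4 := by rw [Fmap_fst, q0_1, q2_1]; norm_num
lemma J02_2 : (Fmap 0 (q 2)).2 = Real.sqrt 3/4 := by rw [Fmap_snd, q0_2, q2_2]; ring
lemma J12_1 : (Fmap 1 (q 2)).1 = 1/2 := by rw [Fmap_fst, q1_1, q2_1]; norm_num
lemma J12_2 : (Fmap 1 (q 2)).2 = 0 := by rw [Fmap_snd, q1_2, q2_2]; norm_num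

lemma ind_J01_F2 {z : ℝ × ℝ} (hz : z ∈ T) : ind (Fmap 0 (q 1)) (Fmap 2 z) = 0 := by
  refine ind_ne (pt_ne_of_fst ?_)
  have h := Fmap2_fst hz
  rw [J01_1]
  intro hc; rw [hc] at h; norm_num at h
lemma ind_J02_F1 {z : ℝ × ℝ} (hz : z ∈ T) : ind (Fmap 0 (q 2)) (Fmap 1 z) = 0 := by
  refine ind_ne (pt_ne_of_fst ?_)
  have h := Fmap1_fst hz
  rw [J02_1]
  intro hc; rw [hc] at h; norm_num at h
lemma ind_J12_F0 {z : ℝ × ℝ} (hz : z ∈ T) : ind (Fmap 1 (q 2)) (Fmap 0 z) = 0 := by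
  refine ind_ne (pt_ne_of_snd ?_)
  have h := Fmap0_snd hz
  rw [J12_2]
  intro hc; rw [hc] at h; nlinarith [s3_pos]


-- Part 4: base case and indicator decompositions
lemma ne_s01_s02 : s(q 0, q 1) ≠ s(q 0, q 2) := by
  simp only [ne_eq, Sym2.eq_iff]
  rintro (⟨-, h⟩ | ⟨h, -⟩)
  exacts [q1_ne_q2 h, q0_ne_q2 h]
lemma ne_s01_s12 : s(q 0, q 1) ≠ s(q 1, q 2) := by
  simp only [ne_eq, Sym2.eq_iff]
  rintro (⟨h, -⟩ | ⟨h, -⟩)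
  exacts [q0_ne_q1 h, q0_ne_q2 h]
lemma ne_s02_s12 : s(q 0, q 2) ≠ s(q 1, q 2) := by
  simp only [ne_eq, Sym2.eq_iff]
  rintro (⟨h, -⟩ | ⟨h, -⟩)
  exacts [q0_ne_q1 h, q0_ne_q2 h]

lemma edgeFinset_zero :
    edgeFinset 0 = {s(q 0, q 1), s(q 0, q 2), s(q 1, q 2)} := by
  ext e
  simp only [Finset.mem_insert, Finset.mem_singleton]
  rw [mem_edgeFinset]
  constructor
  · rintro ⟨x, y, ⟨hxy, w, hlen, ⟨i, rfl⟩, ⟨j, rfl⟩⟩, rfl⟩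
    rw [List.length_eq_zero_iff] at hlen
    subst hlen
    rw [Fword_nil, Fword_nil] at *
    fin_cases i <;> fin_cases j <;>
      first
        | exact absurd rfl hxy
        | exact Or.inl rfl
        | exact Or.inr (Or.inl rfl)
        | exact Or.inr (Or.inr rfl)
        | exact Or.inl (Sym2.eq_swap)
        | exact Or.inr (Or.inl (Sym2.eq_swap))
        | exact Or.inr (Or.inr (Sym2.eq_swap))
  · rintro (rfl | rfl | rfl)
    · exact ⟨_, _, ⟨q0_ne_q1, [], rfl, ⟨0, rfl⟩, ⟨1, rfl⟩⟩, rfl⟩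
    · exact ⟨_, _, ⟨q0_ne_q2, [], rfl, ⟨0, rfl⟩, ⟨2, rfl⟩⟩, rfl⟩
    · exact ⟨_, _, ⟨q1_ne_q2, [], rfl, ⟨1, rfl⟩, ⟨2, rfl⟩⟩, rfl⟩

lemma Bform_base (v w : ℝ × ℝ → ℝ) :
    Bform 0 v w =
      (v (q 0) - v (q 1)) * (w (q 0) - w (q 1)) +
      (v (q 0) - v (q 2)) * (w (q 0) - w (q 2)) +
      (v (q 1) - v (q 2)) * (w (q 1) - w (q 2)) := by
  unfold Bform
  rw [edgeFinset_zero]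
  rw [Finset.sum_insert (by
      simp only [Finset.mem_insert, Finset.mem_singleton]
      rintro (h | h)
      exacts [ne_s01_s02 h, ne_s01_s12 h]),
    Finset.sum_insert (by
      simp only [Finset.mem_singleton]
      exact ne_s02_s12), Finset.sum_singleton]
  simp only [bil, Sym2.lift_mk]
  ring

lemma Bform_eq_onT (m : ℕ) (v : ℝ × ℝ → ℝ) {w w' : ℝ × ℝ → ℝ}
    (h : ∀ z ∈ T, w z = w' z) : Bform m v w = Bform m v w' := Bform_congr m v h

lemma Bform_vanish (m : ℕ) (v : ℝ × ℝ → ℝ) {w : ℝ × ℝ → ℝ}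
    (h : ∀ z ∈ T, w z = 0) : Bform m v w = 0 := by
  rw [Bform_eq_onT m v (w' := fun _ => 0) h]
  exact Bform_zero_right m v

lemma Bform_ind_q0 (m : ℕ) (v : ℝ × ℝ → ℝ) :
    Bform (m+1) v (ind (q 0)) =
      (5/3 : ℝ) * Bform m (v ∘ Fmap 0) (ind (q 0)) := by
  rw [Bform_succ, Fin.sum_univ_three]
  rw [Bform_eq_onT m (v ∘ Fmap 0) (w := ind (q 0) ∘ Fmap 0) (w' := ind (q 0))
    (fun z _ => by
      have h := ind_comp_inj (Fmap_inj 0) (q 0) z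
      rw [Fmap0_q0] at h
      exact h)]
  rw [Bform_vanish m (v ∘ Fmap 1) (w := ind (q 0) ∘ Fmap 1) (fun z hz => ind_q0_F1 hz)]
  rw [Bform_vanish m (v ∘ Fmap 2) (w := ind (q 0) ∘ Fmap 2) (fun z hz => ind_q0_F2 hz)]
  ring

lemma Bform_ind_q1 (m : ℕ) (v : ℝ × ℝ → ℝ) :
    Bform (m+1) v (ind (q 1)) =
      (5/3 : ℝ) * Bform m (v ∘ Fmap 1) (ind (q 1)) := by
  rw [Bform_succ, Fin.sum_univ_three]
  rw [Bform_eq_onT m (v ∘ Fmap 1) (w := ind (q 1) ∘ Fmap 1) (w' := ind (q 1))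
    (fun z _ => by
      have h := ind_comp_inj (Fmap_inj 1) (q 1) z
      rw [Fmap1_q1] at h
      exact h)]
  rw [Bform_vanish m (v ∘ Fmap 0) (w := ind (q 1) ∘ Fmap 0) (fun z hz => ind_q1_F0 hz)]
  rw [Bform_vanish m (v ∘ Fmap 2) (w := ind (q 1) ∘ Fmap 2) (fun z hz => ind_q1_F2 hz)]
  ring

lemma Bform_ind_q2 (m : ℕ) (v : ℝ × ℝ → ℝ) :
    Bform (m+1) v (ind (q 2)) =
      (5/3 : ℝ) * Bform m (v ∘ Fmap 2) (ind (q 2)) := by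
  rw [Bform_succ, Fin.sum_univ_three]
  rw [Bform_eq_onT m (v ∘ Fmap 2) (w := ind (q 2) ∘ Fmap 2) (w' := ind (q 2))
    (fun z _ => by
      have h := ind_comp_inj (Fmap_inj 2) (q 2) z
      rw [Fmap2_q2] at h
      exact h)]
  rw [Bform_vanish m (v ∘ Fmap 0) (w := ind (q 2) ∘ Fmap 0) (fun z hz => ind_q2_F0 hz)]
  rw [Bform_vanish m (v ∘ Fmap 1) (w := ind (q 2) ∘ Fmap 1) (fun z hz => ind_q2_F1 hz)]
  ring

lemma Bform_ind_J01 (m : ℕ) (v : ℝ × ℝ → ℝ) :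
    Bform (m+1) v (ind (Fmap 0 (q 1))) =
      (5/3 : ℝ) * (Bform m (v ∘ Fmap 0) (ind (q 1)) + Bform m (v ∘ Fmap 1) (ind (q 0))) := by
  rw [Bform_succ, Fin.sum_univ_three]
  rw [Bform_eq_onT m (v ∘ Fmap 0) (w' := ind (q 1))
    (fun z _ => by show ind (Fmap 0 (q 1)) (Fmap 0 z) = _; exact ind_comp_inj (Fmap_inj 0) _ _)]
  rw [Bform_eq_onT m (v ∘ Fmap 1) (w' := ind (q 0))
    (fun z _ => by show ind (Fmap 0 (q 1)) (Fmap 1 z) = _; rw [J01]; exact ind_comp_inj (Fmap_inj 1) _ _)]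
  rw [Bform_vanish m (v ∘ Fmap 2) (w := ind (Fmap 0 (q 1)) ∘ Fmap 2) (fun z hz => ind_J01_F2 hz)]
  ring

lemma Bform_ind_J02 (m : ℕ) (v : ℝ × ℝ → ℝ) :
    Bform (m+1) v (ind (Fmap 0 (q 2))) =
      (5/3 : ℝ) * (Bform m (v ∘ Fmap 0) (ind (q 2)) + Bform m (v ∘ Fmap 2) (ind (q 0))) := by
  rw [Bform_succ, Fin.sum_univ_three]
  rw [Bform_eq_onT m (v ∘ Fmap 0) (w' := ind (q 2))
    (fun z _ => by show ind (Fmap 0 (q 2)) (Fmap 0 z) = _; exact ind_comp_inj (Fmap_inj 0) _ _)]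
  rw [Bform_eq_onT m (v ∘ Fmap 2) (w' := ind (q 0))
    (fun z _ => by show ind (Fmap 0 (q 2)) (Fmap 2 z) = _; rw [J02]; exact ind_comp_inj (Fmap_inj 2) _ _)]
  rw [Bform_vanish m (v ∘ Fmap 1) (w := ind (Fmap 0 (q 2)) ∘ Fmap 1) (fun z hz => ind_J02_F1 hz)]
  ring

lemma Bform_ind_J12 (m : ℕ) (v : ℝ × ℝ → ℝ) :
    Bform (m+1) v (ind (Fmap 1 (q 2))) =
      (5/3 : ℝ) * (Bform m (v ∘ Fmap 1) (ind (q 2)) + Bform m (v ∘ Fmap 2) (ind (q 1))) := by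
  rw [Bform_succ, Fin.sum_univ_three]
  rw [Bform_eq_onT m (v ∘ Fmap 1) (w' := ind (q 2))
    (fun z _ => by show ind (Fmap 1 (q 2)) (Fmap 1 z) = _; exact ind_comp_inj (Fmap_inj 1) _ _)]
  rw [Bform_eq_onT m (v ∘ Fmap 2) (w' := ind (q 1))
    (fun z _ => by show ind (Fmap 1 (q 2)) (Fmap 2 z) = _; rw [J12]; exact ind_comp_inj (Fmap_inj 2) _ _)]
  rw [Bform_vanish m (v ∘ Fmap 0) (w := ind (Fmap 1 (q 2)) ∘ Fmap 0) (fun z hz => ind_J12_F0 hz)]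
  ring


-- Part 5: glue machinery
def HO (m : ℕ) (S : Set (ℝ × ℝ)) (v : ℝ × ℝ → ℝ) : Prop :=
  ∀ w : ℝ × ℝ → ℝ, (∀ x ∈ S, w x = 0) → Bform m v w = 0

def corners : Set (ℝ × ℝ) := {q 0, q 1, q 2}

lemma HO_mono {m : ℕ} {S S' : Set (ℝ × ℝ)} {v : ℝ × ℝ → ℝ} (h : S ⊆ S')
    (hv : HO m S v) : HO m S' v :=
  fun w hw => hv w (fun x hx => hw x (h hx))

def glue0 (w : ℝ × ℝ → ℝ) : ℝ × ℝ → ℝ :=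
  fun x => if Real.sqrt 3 / 4 ≤ x.2 then w ((2:ℝ) • x - q 0) else 0
def glue1 (w : ℝ × ℝ → ℝ) : ℝ × ℝ → ℝ :=
  fun x => if Real.sqrt 3 * x.1 + x.2 ≤ Real.sqrt 3 / 2 then w ((2:ℝ) • x - q 1) else 0
def glue2 (w : ℝ × ℝ → ℝ) : ℝ × ℝ → ℝ :=
  fun x => if Real.sqrt 3 / 2 ≤ Real.sqrt 3 * x.1 - x.2 then w ((2:ℝ) • x - q 2) else 0

lemma two_smul_Fmap (i : Fin 3) (z : ℝ × ℝ) : (2:ℝ) • Fmap i z = z + q i := by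
  unfold Fmap
  rw [smul_smul]
  norm_num

lemma Finv_gen (i j : Fin 3) (z : ℝ × ℝ) :
    (2:ℝ) • Fmap i z - q j = z + q i - q j := by rw [two_smul_Fmap]

lemma Finv (i : Fin 3) (z : ℝ × ℝ) : (2:ℝ) • Fmap i z - q i = z := by
  rw [two_smul_Fmap]; abel

lemma xb_1 (n j : ℕ) : (xb n j).1 = (j:ℝ)/2^n := by rw [xb_def]
lemma xb_2 (n j : ℕ) : (xb n j).2 = 0 := by rw [xb_def]

lemma top_unique {z : ℝ × ℝ} (hz : z ∈ T) (h : Real.sqrt 3/2 ≤ z.2) : z = q 0 := by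
  obtain ⟨h0, h1, h2⟩ := hz
  refine Prod.ext ?_ ?_
  · rw [q0_1]; nlinarith [s3_pos]
  · rw [q0_2]; nlinarith [s3_pos]

lemma corner1_unique {z : ℝ × ℝ} (hz : z ∈ T)
    (h : Real.sqrt 3 * z.1 + z.2 ≤ 0) : z = q 1 := by
  obtain ⟨h0, h1, h2⟩ := hz
  refine Prod.ext ?_ ?_
  · rw [q1_1]; nlinarith [s3_pos]
  · rw [q1_2]; nlinarith [s3_pos]

lemma corner2_unique {z : ℝ × ℝ} (hz : z ∈ T)
    (h : Real.sqrt 3 ≤ Real.sqrt 3 * z.1 - z.2) : z = q 2 := by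
  obtain ⟨h0, h1, h2⟩ := hz
  refine Prod.ext ?_ ?_
  · rw [q2_1]; nlinarith [s3_pos]
  · rw [q2_2]; nlinarith [s3_pos]

-- glue0 lemmas
lemma g0_F0 (w : ℝ × ℝ → ℝ) {z : ℝ × ℝ} (hz : z ∈ T) :
    glue0 w (Fmap 0 z) = w z := by
  unfold glue0
  rw [if_pos (Fmap0_snd hz), Finv]

lemma g0_F1 (w : ℝ × ℝ → ℝ) {z : ℝ × ℝ} (hz : z ∈ T) :
    glue0 w (Fmap 1 z) = w (q 1) * ind (q 0) z := by
  unfold glue0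
  by_cases h : z = q 0
  · subst h
    rw [if_pos (by rw [Fmap_snd, q1_2, q0_2]; linarith [s3_pos]), Finv_gen]
    rw [show q 0 + q 1 - q 0 = q 1 by abel, ind_self, mul_one]
  · rw [if_neg ?_, ind_ne h, mul_zero]
    intro hc
    rw [Fmap_snd, q1_2] at hc
    exact h (top_unique hz (by linarith))

lemma g0_F2 (w : ℝ × ℝ → ℝ) {z : ℝ × ℝ} (hz : z ∈ T) :
    glue0 w (Fmap 2 z) = w (q 2) * ind (q 0) z := by
  unfold glue0
  by_cases h : z = q 0
  · subst h
    rw [if_pos (by rw [Fmap_snd, q2_2, q0_2]; linarith [s3_pos]), Finv_gen]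
    rw [show q 0 + q 2 - q 0 = q 2 by abel, ind_self, mul_one]
  · rw [if_neg ?_, ind_ne h, mul_zero]
    intro hc
    rw [Fmap_snd, q2_2] at hc
    exact h (top_unique hz (by linarith))

lemma g0_q0 (w : ℝ × ℝ → ℝ) : glue0 w (q 0) = w (q 0) := by
  have h := g0_F0 w (q_mem_T 0)
  rwa [Fmap0_q0] at h

lemma g0_bot (w : ℝ × ℝ → ℝ) (n j : ℕ) : glue0 w (xb n j) = 0 := by
  unfold glue0
  rw [if_neg]
  rw [xb_2]
  intro hc; nlinarith [s3_pos]

lemma g0_q1 (w : ℝ × ℝ → ℝ) : glue0 w (q 1) = 0 := by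
  have h := g0_bot w 0 0
  rwa [xb_zero] at h

lemma g0_q2 (w : ℝ × ℝ → ℝ) : glue0 w (q 2) = 0 := by
  have h := g0_bot w 0 1
  rwa [show xb 0 1 = q 2 from by rw [show (1:ℕ) = 2^0 from rfl, xb_top]] at h

-- glue1 lemmas
lemma g1_F1 (w : ℝ × ℝ → ℝ) {z : ℝ × ℝ} (hz : z ∈ T) :
    glue1 w (Fmap 1 z) = w z := by
  unfold glue1
  obtain ⟨h0, h1, h2⟩ := hz
  rw [if_pos (by rw [Fmap_fst, Fmap_snd, q1_1, q1_2]; nlinarith [s3_pos]), Finv]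

lemma g1_F0 (w : ℝ × ℝ → ℝ) {z : ℝ × ℝ} (hz : z ∈ T) :
    glue1 w (Fmap 0 z) = w (q 0) * ind (q 1) z := by
  unfold glue1
  by_cases h : z = q 1
  · subst h
    rw [if_pos (by rw [Fmap_fst, Fmap_snd, q0_1, q0_2, q1_1, q1_2]; nlinarith [s3_pos]), Finv_gen]
    rw [show q 1 + q 0 - q 1 = q 0 by abel, ind_self, mul_one]
  · rw [if_neg ?_, ind_ne h, mul_zero]
    intro hc
    rw [Fmap_fst, Fmap_snd, q0_1, q0_2] at hc
    exact h (corner1_unique hz (by nlinarith [s3_pos]))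

lemma g1_F2 (w : ℝ × ℝ → ℝ) {z : ℝ × ℝ} (hz : z ∈ T) :
    glue1 w (Fmap 2 z) = w (q 2) * ind (q 1) z := by
  unfold glue1
  by_cases h : z = q 1
  · subst h
    rw [if_pos (by rw [Fmap_fst, Fmap_snd, q2_1, q2_2, q1_1, q1_2]; nlinarith [s3_pos]), Finv_gen]
    rw [show q 1 + q 2 - q 1 = q 2 by abel, ind_self, mul_one]
  · rw [if_neg ?_, ind_ne h, mul_zero]
    intro hc
    rw [Fmap_fst, Fmap_snd, q2_1, q2_2] at hc
    exact h (corner1_unique hz (by nlinarith [s3_pos]))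

lemma g1_q0 (w : ℝ × ℝ → ℝ) : glue1 w (q 0) = 0 := by
  unfold glue1
  rw [if_neg]
  rw [q0_1, q0_2]
  intro hc; nlinarith [s3_pos]

lemma g1_q2 (w : ℝ × ℝ → ℝ) : glue1 w (q 2) = 0 := by
  unfold glue1
  rw [if_neg]
  rw [q2_1, q2_2]
  intro hc; nlinarith [s3_pos]

lemma xb_mem_T {n j : ℕ} (hj : j ≤ 2^n) : xb n j ∈ T := by
  rw [xb_def]
  have h1 : (0:ℝ) ≤ (j:ℝ)/2^n := by positivity
  have h2 : (j:ℝ)/2^n ≤ 1 := by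
    rw [div_le_one (by positivity)]
    exact_mod_cast hj
  exact ⟨le_refl 0, by positivity, by nlinarith [s3_pos]⟩

lemma g1_bot_le (w : ℝ × ℝ → ℝ) {m j : ℕ} (hj : j ≤ 2^m) :
    glue1 w (xb (m+1) j) = w (xb m j) := by
  rw [← Fmap1_xb, g1_F1 w (xb_mem_T hj)]

lemma g1_bot_gt (w : ℝ × ℝ → ℝ) {m j : ℕ} (hj : 2^m < j) :
    glue1 w (xb (m+1) j) = 0 := by
  unfold glue1
  rw [if_neg]
  rw [xb_1, xb_2]
  have hj' : (2:ℝ)^m < (j:ℝ) := by exact_mod_cast hj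
  intro hc
  have h2 : (0:ℝ) < 2^(m+1) := by positivity
  rw [add_zero, mul_div_assoc'] at hc
  rw [div_le_iff₀ h2] at hc
  rw [pow_succ] at hc
  nlinarith [s3_pos]

-- glue2 lemmas
lemma g2_F2 (w : ℝ × ℝ → ℝ) {z : ℝ × ℝ} (hz : z ∈ T) :
    glue2 w (Fmap 2 z) = w z := by
  unfold glue2
  obtain ⟨h0, h1, h2⟩ := hz
  rw [if_pos (by rw [Fmap_fst, Fmap_snd, q2_1, q2_2]; nlinarith [s3_pos]), Finv]

lemma g2_F0 (w : ℝ × ℝ → ℝ) {z : ℝ × ℝ} (hz : z ∈ T) :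
    glue2 w (Fmap 0 z) = w (q 0) * ind (q 2) z := by
  unfold glue2
  by_cases h : z = q 2
  · subst h
    rw [if_pos (by rw [Fmap_fst, Fmap_snd, q0_1, q0_2, q2_1, q2_2]; nlinarith [s3_pos]), Finv_gen]
    rw [show q 2 + q 0 - q 2 = q 0 by abel, ind_self, mul_one]
  · rw [if_neg ?_, ind_ne h, mul_zero]
    intro hc
    rw [Fmap_fst, Fmap_snd, q0_1, q0_2] at hc
    exact h (corner2_unique hz (by nlinarith [s3_pos]))

lemma g2_F1 (w : ℝ × ℝ → ℝ) {z : ℝ × ℝ} (hz : z ∈ T) :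
    glue2 w (Fmap 1 z) = w (q 1) * ind (q 2) z := by
  unfold glue2
  by_cases h : z = q 2
  · subst h
    rw [if_pos (by rw [Fmap_fst, Fmap_snd, q1_1, q1_2, q2_1, q2_2]; nlinarith [s3_pos]), Finv_gen]
    rw [show q 2 + q 1 - q 2 = q 1 by abel, ind_self, mul_one]
  · rw [if_neg ?_, ind_ne h, mul_zero]
    intro hc
    rw [Fmap_fst, Fmap_snd, q1_1, q1_2] at hc
    exact h (corner2_unique hz (by nlinarith [s3_pos]))

lemma g2_q0 (w : ℝ × ℝ → ℝ) : glue2 w (q 0) = 0 := by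
  unfold glue2
  rw [if_neg]
  rw [q0_1, q0_2]
  intro hc; nlinarith [s3_pos]

lemma g2_q1 (w : ℝ × ℝ → ℝ) : glue2 w (q 1) = 0 := by
  unfold glue2
  rw [if_neg]
  rw [q1_1, q1_2]
  intro hc; nlinarith [s3_pos]

lemma g2_bot_lt (w : ℝ × ℝ → ℝ) {m j : ℕ} (hj : j < 2^m) :
    glue2 w (xb (m+1) j) = 0 := by
  unfold glue2
  rw [if_neg]
  rw [xb_1, xb_2]
  have hj' : (j:ℝ) < (2:ℝ)^m := by exact_mod_cast hj
  intro hc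
  have h2 : (0:ℝ) < 2^(m+1) := by positivity
  rw [sub_zero, mul_div_assoc'] at hc
  rw [le_div_iff₀ h2] at hc
  rw [pow_succ] at hc
  nlinarith [s3_pos]

lemma g2_bot_ge (w : ℝ × ℝ → ℝ) {m j : ℕ} (hj : 2^m ≤ j) (hj2 : j ≤ 2^(m+1)) :
    glue2 w (xb (m+1) (j)) = w (xb m (j - 2^m)) := by
  have key : xb (m+1) j = Fmap 2 (xb m (j - 2^m)) := by
    rw [Fmap2_xb, Nat.sub_add_cancel hj]
  have hle : j - 2^m ≤ 2^m := by
    have : 2^(m+1) = 2^m + 2^m := by rw [pow_succ]; ring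
    omega
  rw [key, g2_F2 w (xb_mem_T hle)]


-- membership helpers
lemma q0_mem_corners : q 0 ∈ corners := by simp [corners]
lemma q1_mem_corners : q 1 ∈ corners := by simp [corners]
lemma q2_mem_corners : q 2 ∈ corners := by simp [corners]
lemma xb_mem_Ebot {m j : ℕ} (hj : j ≤ 2^m) : xb m j ∈ Ebot m := ⟨j, hj, rfl⟩
lemma q1_mem_Ebot (m : ℕ) : q 1 ∈ Ebot m := ⟨0, Nat.zero_le _, (xb_zero m).symm⟩
lemma q2_mem_Ebot (m : ℕ) : q 2 ∈ Ebot m := ⟨2^m, le_refl _, (xb_top m).symm⟩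

-- HO transfer, copy 0
lemma HO_glue0 {m : ℕ} {S : Set (ℝ × ℝ)} {v : ℝ × ℝ → ℝ}
    (hv : HO (m+1) S v)
    (hS : ∀ w' : ℝ × ℝ → ℝ, (∀ x ∈ corners, w' x = 0) → (∀ x ∈ S, glue0 w' x = 0)) :
    HO m corners (v ∘ Fmap 0) := by
  intro w' hw'
  have hq1 : w' (q 1) = 0 := hw' _ q1_mem_corners
  have hq2 : w' (q 2) = 0 := hw' _ q2_mem_corners
  have h0 := hv (glue0 w') (hS w' hw')
  rw [Bform_succ, Fin.sum_univ_three] at h0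
  rw [Bform_eq_onT m (v ∘ Fmap 0) (w := glue0 w' ∘ Fmap 0) (w' := w')
    (fun z hz => g0_F0 w' hz)] at h0
  rw [Bform_vanish m (v ∘ Fmap 1) (w := glue0 w' ∘ Fmap 1)
    (fun z hz => by show glue0 w' (Fmap 1 z) = 0; rw [g0_F1 w' hz, hq1, zero_mul])] at h0
  rw [Bform_vanish m (v ∘ Fmap 2) (w := glue0 w' ∘ Fmap 2)
    (fun z hz => by show glue0 w' (Fmap 2 z) = 0; rw [g0_F2 w' hz, hq2, zero_mul])] at h0
  linarith

lemma HO_glue1 {m : ℕ} {S S' : Set (ℝ × ℝ)} {v : ℝ × ℝ → ℝ}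
    (hv : HO (m+1) S v) (hS'0 : q 0 ∈ S') (hS'2 : q 2 ∈ S')
    (hS : ∀ w' : ℝ × ℝ → ℝ, (∀ x ∈ S', w' x = 0) → (∀ x ∈ S, glue1 w' x = 0)) :
    HO m S' (v ∘ Fmap 1) := by
  intro w' hw'
  have hq0 : w' (q 0) = 0 := hw' _ hS'0
  have hq2 : w' (q 2) = 0 := hw' _ hS'2
  have h0 := hv (glue1 w') (hS w' hw')
  rw [Bform_succ, Fin.sum_univ_three] at h0
  rw [Bform_eq_onT m (v ∘ Fmap 1) (w := glue1 w' ∘ Fmap 1) (w' := w')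
    (fun z hz => g1_F1 w' hz)] at h0
  rw [Bform_vanish m (v ∘ Fmap 0) (w := glue1 w' ∘ Fmap 0)
    (fun z hz => by show glue1 w' (Fmap 0 z) = 0; rw [g1_F0 w' hz, hq0, zero_mul])] at h0
  rw [Bform_vanish m (v ∘ Fmap 2) (w := glue1 w' ∘ Fmap 2)
    (fun z hz => by show glue1 w' (Fmap 2 z) = 0; rw [g1_F2 w' hz, hq2, zero_mul])] at h0
  linarith

lemma HO_glue2 {m : ℕ} {S S' : Set (ℝ × ℝ)} {v : ℝ × ℝ → ℝ}
    (hv : HO (m+1) S v) (hS'0 : q 0 ∈ S') (hS'1 : q 1 ∈ S')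
    (hS : ∀ w' : ℝ × ℝ → ℝ, (∀ x ∈ S', w' x = 0) → (∀ x ∈ S, glue2 w' x = 0)) :
    HO m S' (v ∘ Fmap 2) := by
  intro w' hw'
  have hq0 : w' (q 0) = 0 := hw' _ hS'0
  have hq1 : w' (q 1) = 0 := hw' _ hS'1
  have h0 := hv (glue2 w') (hS w' hw')
  rw [Bform_succ, Fin.sum_univ_three] at h0
  rw [Bform_eq_onT m (v ∘ Fmap 2) (w := glue2 w' ∘ Fmap 2) (w' := w')
    (fun z hz => g2_F2 w' hz)] at h0
  rw [Bform_vanish m (v ∘ Fmap 0) (w := glue2 w' ∘ Fmap 0)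
    (fun z hz => by show glue2 w' (Fmap 0 z) = 0; rw [g2_F0 w' hz, hq0, zero_mul])] at h0
  rw [Bform_vanish m (v ∘ Fmap 1) (w := glue2 w' ∘ Fmap 1)
    (fun z hz => by show glue2 w' (Fmap 1 z) = 0; rw [g2_F1 w' hz, hq1, zero_mul])] at h0
  linarith

-- the六 six instantiated transfers
lemma trans0_corners {m : ℕ} {v : ℝ × ℝ → ℝ} (hv : HO (m+1) corners v) :
    HO m corners (v ∘ Fmap 0) := by
  refine HO_glue0 hv (fun w' hw' x hx => ?_)
  rcases hx with rfl | rfl | rfl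
  · rw [g0_q0]; exact hw' _ q0_mem_corners
  · exact g0_q1 w'
  · exact g0_q2 w'

lemma trans1_corners {m : ℕ} {v : ℝ × ℝ → ℝ} (hv : HO (m+1) corners v) :
    HO m corners (v ∘ Fmap 1) := by
  refine HO_glue1 hv q0_mem_corners q2_mem_corners (fun w' hw' x hx => ?_)
  rcases hx with rfl | rfl | rfl
  · exact g1_q0 w'
  · rw [show glue1 w' (q 1) = w' (q 1) from ?_]
    · exact hw' _ q1_mem_corners
    · have h := g1_F1 w' (q_mem_T 1)
      rwa [Fmap1_q1] at h
  · exact g1_q2 w'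

lemma trans2_corners {m : ℕ} {v : ℝ × ℝ → ℝ} (hv : HO (m+1) corners v) :
    HO m corners (v ∘ Fmap 2) := by
  refine HO_glue2 hv q0_mem_corners q1_mem_corners (fun w' hw' x hx => ?_)
  rcases hx with rfl | rfl | rfl
  · exact g2_q0 w'
  · exact g2_q1 w'
  · rw [show glue2 w' (q 2) = w' (q 2) from ?_]
    · exact hw' _ q2_mem_corners
    · have h := g2_F2 w' (q_mem_T 2)
      rwa [Fmap2_q2] at h

lemma trans0_B {m : ℕ} {v : ℝ × ℝ → ℝ} (hv : HO (m+1) (Ebot (m+1) ∪ {q 0}) v) :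
    HO m corners (v ∘ Fmap 0) := by
  refine HO_glue0 hv (fun w' hw' x hx => ?_)
  rcases hx with ⟨j, hj, rfl⟩ | rfl
  · exact g0_bot w' _ _
  · rw [g0_q0]; exact hw' _ q0_mem_corners

lemma trans1_B {m : ℕ} {v : ℝ × ℝ → ℝ} (hv : HO (m+1) (Ebot (m+1) ∪ {q 0}) v) :
    HO m (Ebot m ∪ {q 0}) (v ∘ Fmap 1) := by
  refine HO_glue1 hv (Or.inr rfl) (Or.inl (q2_mem_Ebot m)) (fun w' hw' x hx => ?_)
  rcases hx with ⟨j, hj, rfl⟩ | rfl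
  · by_cases hj' : j ≤ 2^m
    · rw [g1_bot_le w' hj']
      exact hw' _ (Or.inl (xb_mem_Ebot hj'))
    · exact g1_bot_gt w' (by omega)
  · exact g1_q0 w'

lemma trans2_B {m : ℕ} {v : ℝ × ℝ → ℝ} (hv : HO (m+1) (Ebot (m+1) ∪ {q 0}) v) :
    HO m (Ebot m ∪ {q 0}) (v ∘ Fmap 2) := by
  refine HO_glue2 hv (Or.inr rfl) (Or.inl (q1_mem_Ebot m)) (fun w' hw' x hx => ?_)
  rcases hx with ⟨j, hj, rfl⟩ | rfl
  · by_cases hj' : 2^m ≤ j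
    · rw [g2_bot_ge w' hj' hj]
      refine hw' _ (Or.inl (xb_mem_Ebot ?_))
      have : 2^(m+1) = 2^m + 2^m := by rw [pow_succ]; ring
      omega
    · exact g2_bot_lt w' (by omega)
  · exact g2_q0 w'


-- Part 6: the inductions
lemma ind_vals :
    ind (q 0) (q 0) = 1 ∧ ind (q 0) (q 1) = 0 ∧ ind (q 0) (q 2) = 0 ∧
    ind (q 1) (q 0) = 0 ∧ ind (q 1) (q 1) = 1 ∧ ind (q 1) (q 2) = 0 ∧
    ind (q 2) (q 0) = 0 ∧ ind (q 2) (q 1) = 0 ∧ ind (q 2) (q 2) = 1 :=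
  ⟨ind_self _, ind_ne q0_ne_q1.symm, ind_ne q0_ne_q2.symm,
   ind_ne q0_ne_q1, ind_self _, ind_ne q1_ne_q2.symm,
   ind_ne q0_ne_q2, ind_ne q1_ne_q2, ind_self _⟩

lemma J01_ne_corners : q 0 ≠ Fmap 0 (q 1) ∧ q 1 ≠ Fmap 0 (q 1) ∧ q 2 ≠ Fmap 0 (q 1) :=
  ⟨pt_ne_of_fst (by rw [q0_1, J01_1]; norm_num),
   pt_ne_of_snd (by rw [q1_2, J01_2]; intro hc; nlinarith [s3_pos]),
   pt_ne_of_fst (by rw [q2_1, J01_1]; norm_num)⟩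
lemma J02_ne_corners : q 0 ≠ Fmap 0 (q 2) ∧ q 1 ≠ Fmap 0 (q 2) ∧ q 2 ≠ Fmap 0 (q 2) :=
  ⟨pt_ne_of_fst (by rw [q0_1, J02_1]; norm_num),
   pt_ne_of_snd (by rw [q1_2, J02_2]; intro hc; nlinarith [s3_pos]),
   pt_ne_of_fst (by rw [q2_1, J02_1]; norm_num)⟩
lemma J12_ne_corners : q 0 ≠ Fmap 1 (q 2) ∧ q 1 ≠ Fmap 1 (q 2) ∧ q 2 ≠ Fmap 1 (q 2) :=
  ⟨pt_ne_of_snd (by rw [q0_2, J12_2]; intro hc; nlinarith [s3_pos]),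
   pt_ne_of_fst (by rw [q1_1, J12_1]; norm_num),
   pt_ne_of_fst (by rw [q2_1, J12_1]; norm_num)⟩

lemma Cst : ∀ m : ℕ, ∀ v : ℝ × ℝ → ℝ, HO m corners v →
    Bform m v (ind (q 0)) = (v (q 0) - v (q 1)) + (v (q 0) - v (q 2)) ∧
    Bform m v (ind (q 1)) = (v (q 1) - v (q 0)) + (v (q 1) - v (q 2)) ∧
    Bform m v (ind (q 2)) = (v (q 2) - v (q 0)) + (v (q 2) - v (q 1)) := by
  intro m
  induction m with
  | zero =>
    intro v _
    obtain ⟨e00, e01, e02, e10, e11, e12, e20, e21, e22⟩ := ind_vals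
    refine ⟨?_, ?_, ?_⟩ <;> rw [Bform_base] <;>
      simp only [e00, e01, e02, e10, e11, e12, e20, e21, e22] <;> ring
  | succ m ih =>
    intro v hv
    have h0 := ih (v ∘ Fmap 0) (trans0_corners hv)
    have h1 := ih (v ∘ Fmap 1) (trans1_corners hv)
    have h2 := ih (v ∘ Fmap 2) (trans2_corners hv)
    simp only [Function.comp_apply] at h0 h1 h2
    rw [Fmap0_q0] at h0
    rw [← J01, Fmap1_q1] at h1
    rw [← J02, ← J12, Fmap2_q2] at h2
    -- junction equations
    have ea := hv (ind (Fmap 0 (q 1))) (by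
      rintro x (rfl | rfl | rfl)
      exacts [ind_ne J01_ne_corners.1, ind_ne J01_ne_corners.2.1, ind_ne J01_ne_corners.2.2])
    have eb := hv (ind (Fmap 0 (q 2))) (by
      rintro x (rfl | rfl | rfl)
      exacts [ind_ne J02_ne_corners.1, ind_ne J02_ne_corners.2.1, ind_ne J02_ne_corners.2.2])
    have ec := hv (ind (Fmap 1 (q 2))) (by
      rintro x (rfl | rfl | rfl)
      exacts [ind_ne J12_ne_corners.1, ind_ne J12_ne_corners.2.1, ind_ne J12_ne_corners.2.2])
    rw [Bform_ind_J01, h0.2.1, h1.1] at ea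
    rw [Bform_ind_J02, h0.2.2, h2.1] at eb
    rw [Bform_ind_J12, h1.2.2, h2.2.1] at ec
    refine ⟨?_, ?_, ?_⟩
    · rw [Bform_ind_q0, h0.1]; linarith
    · rw [Bform_ind_q1, h1.2.1]; linarith
    · rw [Bform_ind_q2, h2.2.2]; linarith


def lam : ℕ → ℝ
  | 0 => 2
  | n+1 => 10 * lam n / (3 * (1 + lam n))

lemma lam_pos : ∀ n : ℕ, 0 < lam n := by
  intro n
  induction n with
  | zero => norm_num [lam]
  | succ n ih =>
    show 0 < 10 * lam n / (3 * (1 + lam n))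
    positivity

def Wsum (m : ℕ) (v : ℝ × ℝ → ℝ) : ℝ :=
  (v (xb m 0) + 2 * ∑ j ∈ Finset.Ioo 0 (2^m), v (xb m j) + v (xb m (2^m))) / 2^(m+1)

lemma sum_Ioo_split (m : ℕ) (f : ℕ → ℝ) :
    ∑ j ∈ Finset.Ioo 0 (2^(m+1)), f j =
      ∑ j ∈ Finset.Ioo 0 (2^m), f j + f (2^m) + ∑ j ∈ Finset.Ioo 0 (2^m), f (j + 2^m) := by
  have hK : 0 < 2^m := Nat.pow_pos (by norm_num)
  have h2K : 2^(m+1) = 2^m + 2^m := by rw [pow_succ]; ring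
  have hsplit : Finset.Ioo 0 (2^(m+1)) =
      Finset.Ioo 0 (2^m) ∪ Finset.Ico (2^m) (2^(m+1)) := by
    ext x
    simp only [Finset.mem_Ioo, Finset.mem_Ico, Finset.mem_union]
    omega
  have hdisj : Disjoint (Finset.Ioo 0 (2^m)) (Finset.Ico (2^m) (2^(m+1))) := by
    rw [Finset.disjoint_left]
    intro a ha hb
    simp only [Finset.mem_Ioo] at ha
    simp only [Finset.mem_Ico] at hb
    omega
  rw [hsplit, Finset.sum_union hdisj]
  have hIco : Finset.Ico (2^m) (2^(m+1)) = Finset.image (fun j => j + 2^m) (Finset.Ico 0 (2^m)) := by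
    ext x
    simp only [Finset.mem_Ico, Finset.mem_image]
    constructor
    · intro hx; exact ⟨x - 2^m, by omega, by omega⟩
    · rintro ⟨y, hy, rfl⟩; omega
  rw [hIco, Finset.sum_image (by intro a _ b _ h; dsimp only at h; omega)]
  have hIco0 : Finset.Ico 0 (2^m) = insert 0 (Finset.Ioo 0 (2^m)) := by
    ext x
    simp only [Finset.mem_Ico, Finset.mem_Ioo, Finset.mem_insert]
    omega
  rw [hIco0, Finset.sum_insert (by simp), Nat.zero_add]
  ring

lemma Wsum_split (m : ℕ) (v : ℝ × ℝ → ℝ) :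
    Wsum m (v ∘ Fmap 1) + Wsum m (v ∘ Fmap 2) = 2 * Wsum (m+1) v := by
  unfold Wsum
  simp only [Function.comp_apply, Fmap1_xb, Fmap2_xb]
  rw [sum_Ioo_split m (fun j => v (xb (m+1) j))]
  rw [show (0:ℕ) + 2^m = 2^m from by omega,
    show 2^m + 2^m = 2^(m+1) from by rw [pow_succ]; ring]
  have h1 : (2:ℝ)^(m+1) ≠ 0 := by positivity
  have h2 : (2:ℝ)^(m+1+1) = 2^(m+1) * 2 := by rw [pow_succ]
  rw [h2]
  field_simp
  ring

lemma Bst : ∀ m : ℕ, ∀ v : ℝ × ℝ → ℝ, HO m (Ebot m ∪ {q 0}) v →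
    Bform m v (ind (q 0)) = lam m * (v (q 0) - Wsum m v) := by
  intro m
  induction m with
  | zero =>
    intro v _
    obtain ⟨e00, e01, e02, _, _, _, _, _, _⟩ := ind_vals
    rw [Bform_base]
    simp only [e00, e01, e02]
    show _ = lam 0 * (v (q 0) - (v (xb 0 0) + 2 * ∑ j ∈ Finset.Ioo 0 (2^0), v (xb 0 j) + v (xb 0 (2^0))) / 2^(0+1))
    rw [show Finset.Ioo 0 (2^0) = (∅ : Finset ℕ) from
      Finset.eq_empty_of_forall_notMem (fun x hx => by
        rw [Finset.mem_Ioo, pow_zero] at hx; omega)]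
    rw [Finset.sum_empty, xb_zero, xb_top]
    show _ = 2 * _
    ring
  | succ m ih =>
    intro v hv
    have hlm := lam_pos m
    have h0 := Cst m (v ∘ Fmap 0) (trans0_B hv)
    have h1 := ih (v ∘ Fmap 1) (trans1_B hv)
    have h2 := ih (v ∘ Fmap 2) (trans2_B hv)
    simp only [Function.comp_apply] at h0 h1 h2
    rw [Fmap0_q0] at h0
    rw [← J01] at h1
    rw [← J02] at h2
    -- junction equations at a = F0 q1 and b = F0 q2
    have hbot_ne : ∀ (p : ℝ × ℝ), p.2 = Real.sqrt 3/4 → ∀ x ∈ Ebot (m+1) ∪ {q 0}, ind p x = 0 := by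
      rintro p hp x (⟨j, hj, rfl⟩ | rfl)
      · exact ind_ne (pt_ne_of_snd (by rw [xb_2, hp]; intro hc; nlinarith [s3_pos]))
      · exact ind_ne (pt_ne_of_snd (by rw [q0_2, hp]; intro hc; nlinarith [s3_pos]))
    have ea := hv (ind (Fmap 0 (q 1))) (hbot_ne _ J01_2)
    have eb := hv (ind (Fmap 0 (q 2))) (hbot_ne _ J02_2)
    rw [Bform_ind_J01, h0.2.1, h1] at ea
    rw [Bform_ind_J02, h0.2.2, h2] at eb
    rw [Bform_ind_q0, h0.1]
    -- algebra
    have hW := Wsum_split m v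
    show (5/3 : ℝ) * _ = 10 * lam m / (3 * (1 + lam m)) * _
    have hne : (1:ℝ) + lam m ≠ 0 := by positivity
    set p0 := v (q 0)
    set al := v (Fmap 0 (q 1))
    set be := v (Fmap 0 (q 2))
    set L := Wsum m (v ∘ Fmap 1)
    set R := Wsum m (v ∘ Fmap 2)
    have ea' : (al - p0) + (al - be) + lam m * (al - L) = 0 := by linarith
    have eb' : (be - p0) + (be - al) + lam m * (be - R) = 0 := by linarith
    have key : (1 + lam m) * (al + be) = 2*p0 + lam m * (L + R) := by nlinarith [ea', eb']
    rw [show Wsum (m+1) v = (L + R)/2 from by rw [hW]; ring]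
    field_simp
    nlinarith [key]


-- Part 7: first variation and final assembly
lemma edgeVal_expand (u w : ℝ × ℝ → ℝ) (s : ℝ) (e : Sym2 (ℝ × ℝ)) :
    edgeVal (fun x => u x + s * w x) e =
      edgeVal u e + 2 * s * bil u w e + s^2 * edgeVal w e := by
  induction e using Sym2.inductionOn with
  | hf x y => simp only [edgeVal, bil, Sym2.lift_mk]; ring

lemma energy_expand (m : ℕ) (u w : ℝ × ℝ → ℝ) (s : ℝ) :
    Energy m (fun x => u x + s * w x) =
      Energy m u + 2 * s * Bform m u w + s^2 * Energy m w := by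
  rw [energy_eq_sum, energy_eq_sum, energy_eq_sum]
  unfold Bform
  rw [Finset.sum_congr rfl (fun e _ => edgeVal_expand u w s e)]
  rw [Finset.sum_add_distrib, Finset.sum_add_distrib, ← Finset.mul_sum, ← Finset.mul_sum]
  ring

lemma edgeVal_nonneg (u : ℝ × ℝ → ℝ) (e : Sym2 (ℝ × ℝ)) : 0 ≤ edgeVal u e := by
  induction e using Sym2.inductionOn with
  | hf x y => simp only [edgeVal, Sym2.lift_mk]; positivity

lemma energy_nonneg (m : ℕ) (u : ℝ × ℝ → ℝ) : 0 ≤ Energy m u := by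
  rw [energy_eq_sum]
  have h := Finset.sum_nonneg (fun e (_ : e ∈ edgeFinset m) => edgeVal_nonneg u e)
  positivity

lemma first_variation {m : ℕ} {u w : ℝ × ℝ → ℝ}
    (h : ∀ s : ℝ, Energy m u ≤ Energy m (fun x => u x + s * w x)) :
    Bform m u w = 0 := by
  set B := Bform m u w
  set C := Energy m w with hCdef
  have hC : 0 ≤ C := energy_nonneg m w
  by_contra hB
  have hkey : ∀ s : ℝ, 0 ≤ 2 * s * B + s^2 * C := by
    intro s
    have h2 := h s
    rw [energy_expand] at h2
    linarith
  have hD : (0:ℝ) < C + 1 := by linarith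
  have h2 := hkey (-B/(C+1))
  have hB2 : 0 < B^2 := by positivity
  have hs : (-B/(C+1)) * (C+1) = -B := by field_simp
  set s0 := -B/(C+1)
  nlinarith [h2, hs, hB2, sq_nonneg s0, mul_pos hD hD, sq_nonneg (s0*(C+1))]

lemma q0_not_bot {n j : ℕ} : xb n j ≠ q 0 :=
  pt_ne_of_snd (by rw [xb_2, q0_2]; intro hc; nlinarith [s3_pos])

theorem stmt19' (m : ℕ) (t : ℕ → ℝ) (u : ℝ × ℝ → ℝ)
    (hu : ∀ j ≤ 2 ^ m, u (xb m j) = t j)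
    (hmin : ∀ v : ℝ × ℝ → ℝ, (∀ j ≤ 2 ^ m, v (xb m j) = t j) → Energy m u ≤ Energy m v) :
    u (q 0) =
      (t 0 + 2 * ∑ j ∈ Finset.Ioo 0 (2 ^ m), t j + t (2 ^ m)) / 2 ^ (m + 1) := by
  have hHO : HO m (Ebot m) u := by
    intro w hw
    refine first_variation (fun s => hmin _ (fun j hj => ?_))
    show u (xb m j) + s * w (xb m j) = t j
    rw [hu j hj, hw _ (xb_mem_Ebot hj), mul_zero, add_zero]
  have h1 : Bform m u (ind (q 0)) = 0 := by
    refine hHO (ind (q 0)) (fun x hx => ?_)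
    obtain ⟨j, hj, rfl⟩ := hx
    exact ind_ne q0_not_bot
  have h2 := Bst m u (HO_mono Set.subset_union_left hHO)
  rw [h1] at h2
  have hlm := lam_pos m
  have h3 : u (q 0) = Wsum m u := by
    rcases mul_eq_zero.mp h2.symm with hc | hc
    · exact absurd hc (ne_of_gt hlm)
    · linarith
  rw [h3]
  unfold Wsum
  rw [hu 0 (Nat.zero_le _), hu (2^m) (le_refl _),
    Finset.sum_congr rfl (fun j hj => hu j (by
      rw [Finset.mem_Ioo] at hj; omega))]


/-- If `u` minimizes the level-`m` energy among all functions with the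
prescribed values `t₀, …, t_{2^m}` on the bottom row, then
`u(q₀) = 2^{−(m+1)}(t₀ + 2t₁ + ⋯ + 2t_{2^m−1} + t_{2^m})`. -/
theorem stmt19 (m : ℕ) (t : ℕ → ℝ) (u : ℝ × ℝ → ℝ)
    (hu : ∀ j ≤ 2 ^ m, u (xb m j) = t j)
    (hmin : ∀ v : ℝ × ℝ → ℝ, (∀ j ≤ 2 ^ m, v (xb m j) = t j) → Energy m u ≤ Energy m v) :
    u (q 0) =
      (t 0 + 2 * ∑ j ∈ Finset.Ioo 0 (2 ^ m), t j + t (2 ^ m)) / 2 ^ (m + 1) :=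
  stmt19' m t u hu hmin

end SGPaper
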